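/- For A ∈ End(V) that is ω-skew-symmetric and commutes with each Ja (so A ∈ so*(2n)), the Ricci tensor Ric_A(y,z) := Tr{x ↦ R_A(x,y)z} of the curvature operator R_A equals 2(n+2)κ ω(Ay, z). -/
import Mathlib

section Aux

variable {V : Type*} [AddCommGroup V] [Module ℝ V] [FiniteDimensional ℝ V]

private lemma trace_smulRight' (f : Module.Dual ℝ V) (v : V) :
    LinearMap.trace ℝ V (f.smulRight v) = f v := by
  have h : f.smulRight v = dualTensorHom ℝ V V (f ⊗ₜ v) := by
    ext x; simp [dualTensorHom_apply]
  rw [h, LinearMap.trace_eq_contract_apply]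
  simp

private lemma trace_neg' (f : Module.End ℝ V) :
    LinearMap.trace ℝ V (-f) = - LinearMap.trace ℝ V f := by
  rw [show (-f) = ((-1 : ℝ) • f) by ext v; simp, LinearMap.map_smul]
  simp

private lemma trace_skew_zero (ω : LinearMap.BilinForm ℝ V)
    (hnd : ∀ x, (∀ y, ω x y = 0) → x = 0)
    (A : Module.End ℝ V) (hAskew : ∀ x y, ω (A x) y = - ω x (A y)) :
    LinearMap.trace ℝ V A = 0 := by
  have hinj : Function.Injective (ω : V →ₗ[ℝ] Module.Dual ℝ V) := by
    rw [← LinearMap.ker_eq_bot, LinearMap.ker_eq_bot']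
    intro x hx
    exact hnd x fun y => by rw [hx]; rfl
  have hsurj : Function.Surjective (ω : V →ₗ[ℝ] Module.Dual ℝ V) := by
    rw [← LinearMap.injective_iff_surjective_of_finrank_eq_finrank
      (Subspace.dual_finrank_eq).symm]
    exact hinj
  let e : V ≃ₗ[ℝ] Module.Dual ℝ V := LinearEquiv.ofBijective ω ⟨hinj, hsurj⟩
  have hconj : e.conj A = - Module.Dual.transpose (R := ℝ) A := by
    apply LinearMap.ext
    intro f
    obtain ⟨x, rfl⟩ := hsurj f
    apply LinearMap.ext
    intro y
    simp only [LinearEquiv.conj_apply, LinearMap.comp_apply, LinearEquiv.coe_coe,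
      LinearMap.neg_apply, Module.Dual.transpose_apply]
    have : e.symm (ω x) = x := e.symm_apply_apply x
    rw [show ((e : V ≃ₗ[ℝ] Module.Dual ℝ V).symm (ω x)) = x from this]
    exact hAskew x y
  have h1 : LinearMap.trace ℝ V A = LinearMap.trace ℝ _ (e.conj A) :=
    (LinearMap.trace_conj' A e).symm
  rw [hconj] at h1
  rw [show (-(Module.Dual.transpose (R := ℝ) A)) = ((-1 : ℝ) • Module.Dual.transpose (R := ℝ) A)
    by ext φ v; simp, LinearMap.map_smul, LinearMap.trace_transpose'] at h1
  simp only [smul_eq_mul] at h1; linarith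

private lemma trace_JA_zero (J : Fin 3 → Module.End ℝ V)
    (hJsq : ∀ a, J a * J a = -1) (hJJJ : J 0 * J 1 * J 2 = -1)
    (A : Module.End ℝ V) (hAcomm : ∀ a, A * J a = J a * A) :
    ∀ a, LinearMap.trace ℝ V (J a * A) = 0 := by
  have h01 : J 0 * J 1 = J 2 := by
    have h : (J 0 * J 1) * (J 2 * J 2) = -1 * J 2 := by rw [← mul_assoc, hJJJ]
    rw [hJsq] at h
    simpa using h
  have h12 : J 1 * J 2 = J 0 := by
    have h : J 0 * (J 0 * J 1 * J 2) = J 0 * (-1) := by rw [hJJJ]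
    simp only [← mul_assoc] at h
    rw [hJsq] at h
    simpa using h
  have h02 : J 0 * J 2 = -J 1 := by
    rw [← h01, ← mul_assoc, hJsq]; simp
  have h10 : J 1 * J 0 = -J 2 := by
    rw [← h12, ← mul_assoc, hJsq]; simp
  have h21 : J 2 * J 1 = -J 0 := by
    rw [← h01, mul_assoc, hJsq]; simp
  have h20 : J 2 * J 0 = J 1 := by
    rw [← h12, ← mul_assoc, h21, neg_mul, h02, neg_neg]
  intro a
  fin_cases a
  · show LinearMap.trace ℝ V (J 0 * A) = 0
    have h : LinearMap.trace ℝ V (J 0 * A) = LinearMap.trace ℝ V (-(J 0 * A)) := by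
      conv_lhs => rw [← h12, mul_assoc, ← hAcomm 2, ← mul_assoc, LinearMap.trace_mul_comm,
        ← mul_assoc, h21, neg_mul]
    rw [trace_neg'] at h; linarith
  · show LinearMap.trace ℝ V (J 1 * A) = 0
    have h : LinearMap.trace ℝ V (J 1 * A) = LinearMap.trace ℝ V (-(J 1 * A)) := by
      conv_lhs => rw [← h20, mul_assoc, ← hAcomm 0, ← mul_assoc, LinearMap.trace_mul_comm,
        ← mul_assoc, h02, neg_mul]
    rw [trace_neg'] at h; linarith
  · show LinearMap.trace ℝ V (J 2 * A) = 0
    have h : LinearMap.trace ℝ V (J 2 * A) = LinearMap.trace ℝ V (-(J 2 * A)) := by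
      conv_lhs => rw [← h01, mul_assoc, ← hAcomm 1, ← mul_assoc, LinearMap.trace_mul_comm,
        ← mul_assoc, h10, neg_mul]
    rw [trace_neg'] at h; linarith

private lemma trace_J_zero (J : Fin 3 → Module.End ℝ V)
    (hJsq : ∀ a, J a * J a = -1) (hJJJ : J 0 * J 1 * J 2 = -1) :
    ∀ a, LinearMap.trace ℝ V (J a) = 0 := by
  intro a
  have := trace_JA_zero J hJsq hJJJ 1 (fun a => by rw [one_mul, mul_one]) a
  simpa using this

end Aux


/-- The curvature operator R_A(·,y)z as an endomorphism in the first argument x: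
x ↦ R_A(x,y)z = κ ω(x,y) Az
  + (κ/2)(ω(x,z)Ay - Σₐ gₐ(x,z)JₐAy + ω(Ay,z)x - Σₐ gₐ(Ay,z)Jₐx)
  - (κ/2)(ω(y,z)Ax - Σₐ gₐ(y,z)JₐAx + ω(Ax,z)y - Σₐ gₐ(Ax,z)Jₐy)
  - (κ/2) Σₐ (gₐ(x,Ay) - gₐ(y,Ax)) Jₐz,
where gₐ(u,w) = ω(u, Jₐ w). -/
noncomputable def curvOp {V : Type*} [AddCommGroup V] [Module ℝ V]
    (ω : LinearMap.BilinForm ℝ V) (J : Fin 3 → Module.End ℝ V)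
    (A : Module.End ℝ V) (κ : ℝ) (y z : V) : Module.End ℝ V :=
  κ • ((ω.flip y).smulRight (A z))
  + (κ / 2) • ((ω.flip z).smulRight (A y)
      - ∑ a : Fin 3, (ω.flip (J a z)).smulRight (J a (A y))
      + ω (A y) z • (LinearMap.id : Module.End ℝ V)
      - ∑ a : Fin 3, ω (A y) (J a z) • J a)
  - (κ / 2) • (ω y z • A
      - ∑ a : Fin 3, ω y (J a z) • (J a * A)
      + ((ω.flip z) ∘ₗ (A : V →ₗ[ℝ] V)).smulRight y
      - ∑ a : Fin 3, ((ω.flip (J a z)) ∘ₗ (A : V →ₗ[ℝ] V)).smulRight (J a y))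
  - (κ / 2) • (∑ a : Fin 3,
      ((ω.flip (J a (A y))) - (ω y) ∘ₗ ((J a * A : Module.End ℝ V) : V →ₗ[ℝ] V)).smulRight
        (J a z))

/- STATEMENT 8: For A ∈ so*(2n) (A ω-skew-symmetric and commuting with each Jₐ), the Ricci
tensor Ric_A(y,z) = Tr{x ↦ R_A(x,y)z} equals 2(n+2) κ ω(Ay, z). -/
theorem stmt8 (V : Type*) [AddCommGroup V] [Module ℝ V] [FiniteDimensional ℝ V]
    (n : ℕ) (hdim : Module.finrank ℝ V = 4 * n)
    (J : Fin 3 → Module.End ℝ V)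
    (hJsq : ∀ a, J a * J a = -1)
    (hJJJ : J 0 * J 1 * J 2 = -1)
    (ω : LinearMap.BilinForm ℝ V)
    (hskew : ∀ x y, ω x y = - ω y x)
    (hnd : ∀ x, (∀ y, ω x y = 0) → x = 0)
    (hherm : ∀ (a : Fin 3) x y, ω (J a x) (J a y) = ω x y)
    (κ : ℝ) (hκ : κ ≠ 0)
    (A : Module.End ℝ V)
    (hAskew : ∀ x y, ω (A x) y = - ω x (A y))
    (hAcomm : ∀ a, A * J a = J a * A) :
    ∀ y z : V,
      LinearMap.trace ℝ V (curvOp ω J A κ y z) = 2 * ((n : ℝ) + 2) * κ * ω (A y) z := by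
  intro y z
  have hAJ : ∀ a (x : V), A (J a x) = J a (A x) := fun a x => by
    have := LinearMap.ext_iff.mp (hAcomm a) x
    simpa using this
  have hJJ : ∀ a (x : V), J a (J a x) = -x := fun a x => by
    have := LinearMap.ext_iff.mp (hJsq a) x
    simpa using this
  have htrA : LinearMap.trace ℝ V A = 0 := trace_skew_zero ω hnd A hAskew
  have htrJ : ∀ a, LinearMap.trace ℝ V (J a) = 0 := trace_J_zero J hJsq hJJJ
  have htrJA : ∀ a, LinearMap.trace ℝ V (J a * A) = 0 := trace_JA_zero J hJsq hJJJ A hAcomm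
  have e1 : ω (A z) y = ω (A y) z := by rw [hAskew z y, hskew z (A y), neg_neg]
  have e2 : ω y (A z) = - ω (A y) z := by have := hAskew y z; linarith
  have e3 : ω z (A y) = - ω (A y) z := hskew z (A y)
  rw [curvOp]
  simp only [map_add, map_sub, map_sum, LinearMap.map_smul, trace_smulRight',
    LinearMap.trace_id, htrA, htrJ, htrJA, LinearMap.flip_apply, LinearMap.BilinForm.flip_apply, LinearMap.comp_apply,
    LinearMap.sub_apply, Module.End.mul_apply, hAJ, hJJ, hherm, map_neg,
    smul_eq_mul, mul_zero, Finset.sum_const_zero, e1, e2, e3, hdim,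
    Fin.sum_univ_three]
  push_cast
  ring
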